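/- Let (X, φ) be a size pair with at most finitely many homological 0-critical values, and let w be a homological 0-critical value. If ι_0^{w−ε, w+ε} is surjective for every sufficiently small ε > 0, then there exists u < w such that w is a discontinuity point of the function v ↦ ℓ_{(X,φ)}(u, v). -/

import Mathlib

universe u v

/-- An abstract packaging of (degree-0) Čech homology with coefficients in a field `K`,
applied to the subspaces of a topological space `X`: absolute groups `Ȟ₀(S)`, relative
groups `Ȟ₀(T, S)`, inclusion-induced homomorphisms, together with the standard
properties of Čech homology on compact Hausdorff pairs with field coefficients
(rank `Ȟ₀` = number of connected components, functoriality, exactness of the final part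
of the homology sequence of a pair). -/
structure CechTheory (X : Type u) [TopologicalSpace X] (K : Type v) [Field K] where
  /-- the 0-th Čech homology group of a subspace -/
  H0 : Set X → Type v
  [h0Add : ∀ S : Set X, AddCommGroup (H0 S)]
  [h0Mod : ∀ S : Set X, Module K (H0 S)]
  /-- the relative 0-th Čech homology group `Ȟ₀(T, S)` -/
  H0rel : Set X → Set X → Type v
  [h0relAdd : ∀ T S : Set X, AddCommGroup (H0rel T S)]
  [h0relMod : ∀ T S : Set X, Module K (H0rel T S)]
  /-- the homomorphism induced by an inclusion of subspaces -/
  map : ∀ {S T : Set X}, S ⊆ T → (H0 S →ₗ[K] H0 T)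
  /-- the homomorphism induced by an inclusion of pairs -/
  maprel : ∀ {T S T' S' : Set X}, T ⊆ T' → S ⊆ S' → (H0rel T S →ₗ[K] H0rel T' S')
  /-- the natural map `Ȟ₀(T) → Ȟ₀(T, S)` -/
  quot : ∀ T S : Set X, H0 T →ₗ[K] H0rel T S
  map_comp : ∀ {S T U : Set X} (h₁ : S ⊆ T) (h₂ : T ⊆ U),
    (map h₂).comp (map h₁) = map (h₁.trans h₂)
  /-- the homology class of a point -/
  cls : ∀ S : Set X, S → H0 S
  map_cls : ∀ {S T : Set X} (h : S ⊆ T) (x : S), map h (cls S x) = cls T ⟨x.1, h x.2⟩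
  cls_eq_iff : ∀ S : Set X, IsCompact S → ∀ x y : S,
    (cls S x = cls S y ↔ connectedComponent x = connectedComponent y)
  cls_span : ∀ S : Set X, IsCompact S →
    Submodule.span K (Set.range (cls S)) = ⊤
  cls_indep : ∀ S : Set X, IsCompact S → ∀ f : ConnectedComponents ↥S → ↥S,
    (∀ c, ConnectedComponents.mk (f c) = c) →
    LinearIndependent K fun c => cls S (f c)
  quot_surjective : ∀ T S : Set X, S ⊆ T → Function.Surjective (quot T S)
  exact_pair : ∀ {S T : Set X} (h : S ⊆ T),
    LinearMap.range (map h) = LinearMap.ker (quot T S)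

attribute [instance] CechTheory.h0Add CechTheory.h0Mod CechTheory.h0relAdd
  CechTheory.h0relMod

/-- The size function of a size pair: `sizeFun φ u v` is the number of connected
components of the sublevel set `X_v = {φ ≤ v}` containing at least one point of
`X_u = {φ ≤ u}`. -/
noncomputable def sizeFun {X : Type u} [TopologicalSpace X] (φ : X → ℝ) (u v : ℝ) : ℕ :=
  Set.ncard {C : Set ↥{x : X | φ x ≤ v} |
    ∃ p : ↥{x : X | φ x ≤ v}, φ (p : X) ≤ u ∧ C = connectedComponent p}

/-- `w` is a homological 0-critical value for the size pair `(X, φ)`: for every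
sufficiently small `ε > 0`, the map `ι₀^{w-ε,w+ε} : Ȟ₀(X_{w-ε}) → Ȟ₀(X_{w+ε})` induced by
inclusion is not an isomorphism. -/
def CechTheory.IsHomCritical {X : Type u} [TopologicalSpace X] {K : Type v} [Field K]
    (C : CechTheory X K) (φ : X → ℝ) (w : ℝ) : Prop :=
  ∃ ε₀ > (0 : ℝ), ∀ ε : ℝ, ∀ hε : 0 < ε, ε < ε₀ →
    ¬ Function.Bijective (C.map (show {x : X | φ x ≤ w - ε} ⊆ {x : X | φ x ≤ w + ε} from
      fun x (hx : φ x ≤ w - ε) => show φ x ≤ w + ε from le_trans hx (by linarith)))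

open Set

section TopAux

variable {X : Type*} [TopologicalSpace X]

theorem mem_ccIn_iff' {F : Set X} {a b : X} (ha : a ∈ F) (hb : b ∈ F) :
    b ∈ connectedComponentIn F a ↔
      connectedComponent (⟨a, ha⟩ : F) = connectedComponent (⟨b, hb⟩ : F) := by
  rw [connectedComponentIn_eq_image ha]
  constructor
  · rintro ⟨z, hz, hzb⟩
    have hzb' : z = ⟨b, hb⟩ := Subtype.ext hzb
    subst hzb'
    exact connectedComponent_eq hz
  · intro h
    exact ⟨⟨b, hb⟩, by rw [h]; exact mem_connectedComponent, rfl⟩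

theorem comp_eq_mono' {F G : Set X} (hFG : F ⊆ G) {a b : X} (ha : a ∈ F) (hb : b ∈ F)
    (hab : connectedComponent (⟨a, ha⟩ : F) = connectedComponent (⟨b, hb⟩ : F)) :
    connectedComponent (⟨a, hFG ha⟩ : G) = connectedComponent (⟨b, hFG hb⟩ : G) := by
  rw [← mem_ccIn_iff' ha hb] at hab
  rw [← mem_ccIn_iff' (hFG ha) (hFG hb)]
  exact connectedComponentIn_mono a hFG hab

theorem isCompact_ccIn [T2Space X] {F : Set X} (hF : IsCompact F) (a : X) :
    IsCompact (connectedComponentIn F a) := by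
  by_cases ha : a ∈ F
  · rw [connectedComponentIn_eq_image ha]
    have : CompactSpace F := isCompact_iff_compactSpace.mp hF
    exact (isClosed_connectedComponent.isCompact).image continuous_subtype_val
  · rw [connectedComponentIn_eq_empty ha]
    exact isCompact_empty

theorem isPreconnected_iInter_of_directed' [T2Space X] [CompactSpace X] {ι : Type*} [Nonempty ι]
    {K : ι → Set X} (hd : Directed (· ⊇ ·) K) (hc : ∀ i, IsCompact (K i))
    (hcl : ∀ i, IsClosed (K i)) (hconn : ∀ i, IsPreconnected (K i)) :
    IsPreconnected (⋂ i, K i) := by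
  set S := ⋂ i, K i with hS
  intro U V hU hV hSUV hSU hSV
  by_contra hne
  rw [Set.not_nonempty_iff_eq_empty] at hne
  have hSsub : ∀ i, S ⊆ K i := fun i => iInter_subset K i
  have hZ1 : S ∩ U = S \ V := by
    apply Subset.antisymm
    · rintro z ⟨hz, hzU⟩
      refine ⟨hz, fun hzV => ?_⟩
      have h3 : z ∈ S ∩ (U ∩ V) := ⟨hz, hzU, hzV⟩
      rw [hne] at h3
      exact h3
    · rintro z ⟨hz, hzV⟩
      rcases hSUV hz with h | h
      · exact ⟨hz, h⟩
      · exact absurd h hzV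
  have hZ2 : S ∩ V = S \ U := by
    apply Subset.antisymm
    · rintro z ⟨hz, hzV⟩
      refine ⟨hz, fun hzU => ?_⟩
      have h3 : z ∈ S ∩ (U ∩ V) := ⟨hz, hzU, hzV⟩
      rw [hne] at h3
      exact h3
    · rintro z ⟨hz, hzU⟩
      rcases hSUV hz with h | h
      · exact absurd h hzU
      · exact ⟨hz, h⟩
  have hSclosed : IsClosed S := isClosed_iInter fun i => hcl i
  have hc1 : IsCompact (S ∩ U) := by
    rw [hZ1]
    exact ((hSclosed.sdiff hV).isCompact)
  have hc2 : IsCompact (S ∩ V) := by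
    rw [hZ2]
    exact ((hSclosed.sdiff hU).isCompact)
  have hdisj : Disjoint (S ∩ U) (S ∩ V) := by
    rw [Set.disjoint_iff_inter_eq_empty]
    rw [show (S ∩ U) ∩ (S ∩ V) = S ∩ (U ∩ V) by ext z; simp only [Set.mem_inter_iff]; tauto]
    exact hne
  obtain ⟨U', V', hU', hV', hsubU', hsubV', hUV'⟩ :=
    SeparatedNhds.of_isCompact_isCompact hc1 hc2 hdisj
  have hcover : S ⊆ U' ∪ V' := by
    intro z hz
    rcases hSUV hz with h | h
    · exact Or.inl (hsubU' ⟨hz, h⟩)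
    · exact Or.inr (hsubV' ⟨hz, h⟩)
  -- find i with K i ⊆ U' ∪ V'
  have hex : ∃ i, K i \ (U' ∪ V') = ∅ := by
    by_contra hno
    push_neg at hno
    have := IsCompact.nonempty_iInter_of_directed_nonempty_isCompact_isClosed
      (fun i => K i \ (U' ∪ V'))
      (fun i j => by
        obtain ⟨k, hki, hkj⟩ := hd i j
        exact ⟨k, diff_subset_diff_left hki, diff_subset_diff_left hkj⟩)
      (fun i => hno i)
      (fun i => (hc i).diff (hU'.union hV'))
      (fun i => (hcl i).sdiff (hU'.union hV'))
    obtain ⟨z, hz⟩ := this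
    rw [Set.mem_iInter] at hz
    have hzS : z ∈ S := Set.mem_iInter.mpr fun i => ((hz i).1)
    exact (hz (Classical.arbitrary _)).2 (hcover hzS)
  obtain ⟨i, hi⟩ := hex
  have hKi : K i ⊆ U' ∪ V' := by
    rw [Set.diff_eq_empty] at hi
    exact hi
  have hne1 : (K i ∩ U').Nonempty := by
    obtain ⟨z0, hz0⟩ := hSU
    exact ⟨z0, hSsub i hz0.1, hsubU' hz0⟩
  have hne2 : (K i ∩ V').Nonempty := by
    obtain ⟨z0, hz0⟩ := hSV
    exact ⟨z0, hSsub i hz0.1, hsubV' hz0⟩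
  obtain ⟨z, hzK, hzU', hzV'⟩ := hconn i U' V' hU' hV' hKi hne1 hne2
  exact Set.disjoint_left.mp hUV' hzU' hzV'

end TopAux


section SizeAux

variable {X : Type*} [TopologicalSpace X]

theorem mem_ccIn_of_forall_gt [T2Space X] [CompactSpace X] {φ : X → ℝ} (hφ : Continuous φ)
    {a b : X} {m : ℝ} (ha : φ a ≤ m)
    (h : ∀ v, m < v → b ∈ connectedComponentIn {x : X | φ x ≤ v} a) :
    b ∈ connectedComponentIn {x : X | φ x ≤ m} a := by
  have hA : ∀ v : ℝ, IsCompact {x : X | φ x ≤ v} :=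
    fun v => (IsClosed.preimage hφ isClosed_Iic).isCompact
  set K : {d : ℝ // (0:ℝ) < d} → Set X :=
    fun d => connectedComponentIn {x : X | φ x ≤ m + d.1} a with hK
  have instNe : Nonempty {d : ℝ // (0:ℝ) < d} := ⟨⟨1, one_pos⟩⟩
  have hmem : ∀ d : {d : ℝ // (0:ℝ) < d}, a ∈ {x : X | φ x ≤ m + d.1} :=
    fun d => le_trans ha (by linarith [d.2])
  have hmono : ∀ d e : {d : ℝ // (0:ℝ) < d}, d.1 ≤ e.1 → K d ⊆ K e := by
    intro d e hde
    apply connectedComponentIn_mono a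
    intro x hx
    have hx' : φ x ≤ m + d.1 := hx
    show φ x ≤ m + e.1
    linarith
  have hd : Directed (· ⊇ ·) K := by
    intro d e
    refine ⟨⟨min d.1 e.1, lt_min d.2 e.2⟩, ?_, ?_⟩
    · exact hmono _ _ (min_le_left _ _)
    · exact hmono _ _ (min_le_right _ _)
  have hcomp : ∀ d, IsCompact (K d) := fun d => isCompact_ccIn (hA _) a
  have hclsd : ∀ d, IsClosed (K d) := fun d => (hcomp d).isClosed
  have hconn : ∀ d, IsPreconnected (K d) := fun d => isPreconnected_connectedComponentIn
  have hpre : IsPreconnected (⋂ d, K d) :=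
    isPreconnected_iInter_of_directed' hd hcomp hclsd hconn
  have haK : a ∈ ⋂ d, K d := mem_iInter.mpr fun d => mem_connectedComponentIn (hmem d)
  have hbK : b ∈ ⋂ d, K d := mem_iInter.mpr fun d => h _ (by linarith [d.2])
  have hsub : (⋂ d, K d) ⊆ {x : X | φ x ≤ m} := by
    intro z hz
    have h2 : ∀ d : ℝ, 0 < d → φ z ≤ m + d := fun d hd0 =>
      connectedComponentIn_subset {x : X | φ x ≤ m + d} a (mem_iInter.mp hz ⟨d, hd0⟩)
    exact le_of_forall_pos_le_add h2
  exact hpre.subset_connectedComponentIn haK hsub hbK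

theorem sizeSet_finite [CompactSpace X] [LocallyConnectedSpace X] {φ : X → ℝ}
    (hφ : Continuous φ) {u v : ℝ} (huv : u < v) :
    {C : Set ↥{x : X | φ x ≤ v} |
      ∃ p : ↥{x : X | φ x ≤ v}, φ (p : X) ≤ u ∧ C = connectedComponent p}.Finite := by
  classical
  have hKuc : IsCompact {x : X | φ x ≤ u} := (IsClosed.preimage hφ isClosed_Iic).isCompact
  have hO : IsOpen {x : X | φ x < v} := isOpen_lt hφ continuous_const
  have hV : ∀ p, p ∈ {x : X | φ x ≤ u} →
      ∃ V, V ∈ nhds p ∧ IsPreconnected V ∧ V ⊆ {x : X | φ x < v} := by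
    intro p hp
    rcases locallyConnectedSpace_iff_connected_subsets.mp inferInstance p _
      (hO.mem_nhds (lt_of_le_of_lt hp huv)) with ⟨V, h1, h2, h3⟩
    exact ⟨V, h1, h2, h3⟩
  choose Vf hVf1 hVf2 hVf3 using hV
  obtain ⟨t, ht⟩ := hKuc.elim_nhds_subcover' Vf hVf1
  set G : ↥{x : X | φ x ≤ u} → Set ↥{x : X | φ x ≤ v} := fun q =>
    connectedComponent (⟨q.1, le_of_lt (lt_of_le_of_lt q.2 huv)⟩ : ↥{x : X | φ x ≤ v}) with hG
  apply Set.Finite.subset (t.finite_toSet.image G)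
  rintro C ⟨p, hpu, rfl⟩
  have hpKu : p.1 ∈ {x : X | φ x ≤ u} := hpu
  have hpcov := ht hpKu
  rw [Set.mem_iUnion₂] at hpcov
  obtain ⟨q, hq, hpV⟩ := hpcov
  refine ⟨q, hq, ?_⟩
  have hVsub : Vf q.1 q.2 ⊆ {x : X | φ x ≤ v} := fun x hx => show φ x ≤ v from le_of_lt (hVf3 q.1 q.2 hx)
  have hqV : q.1 ∈ Vf q.1 q.2 := mem_of_mem_nhds (hVf1 q.1 q.2)
  have hmem : p.1 ∈ connectedComponentIn {x : X | φ x ≤ v} q.1 :=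
    (hVf2 q.1 q.2).subset_connectedComponentIn hqV hVsub hpV
  have hcc := (mem_ccIn_iff' (hVsub hqV) p.2).mp hmem
  exact hcc

theorem sizeFun_lt' [CompactSpace X] [LocallyConnectedSpace X] {φ : X → ℝ}
    (hφ : Continuous φ) {u v v' : ℝ} (huv : u < v) (hvv' : v ≤ v') {a b : X}
    (hau : φ a ≤ u) (hbu : φ b ≤ u)
    (hne : b ∉ connectedComponentIn {x : X | φ x ≤ v} a)
    (heq : b ∈ connectedComponentIn {x : X | φ x ≤ v'} a) :
    sizeFun φ u v' < sizeFun φ u v := by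
  classical
  have huv' : u < v' := lt_of_lt_of_le huv hvv'
  have hsub : {x : X | φ x ≤ v} ⊆ {x : X | φ x ≤ v'} := fun x hx => le_trans hx hvv'
  have hav : a ∈ {x : X | φ x ≤ v} := le_trans hau (le_of_lt huv)
  have hbv : b ∈ {x : X | φ x ≤ v} := le_trans hbu (le_of_lt huv)
  have hav' : a ∈ {x : X | φ x ≤ v'} := hsub hav
  have hbv' : b ∈ {x : X | φ x ≤ v'} := hsub hbv
  set S := {C : Set ↥{x : X | φ x ≤ v} |
    ∃ p : ↥{x : X | φ x ≤ v}, φ (p : X) ≤ u ∧ C = connectedComponent p} with hSdef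
  set S' := {C : Set ↥{x : X | φ x ≤ v'} |
    ∃ p : ↥{x : X | φ x ≤ v'}, φ (p : X) ≤ u ∧ C = connectedComponent p} with hS'def
  have hSfin : S.Finite := sizeSet_finite hφ huv
  set g : Set ↥{x : X | φ x ≤ v'} → Set ↥{x : X | φ x ≤ v} := fun C =>
    if h : ∃ p : ↥{x : X | φ x ≤ v'}, φ (p : X) ≤ u ∧ C = connectedComponent p then
      connectedComponent
        (⟨(h.choose : ↥{x : X | φ x ≤ v'}).1,
          le_trans h.choose_spec.1 (le_of_lt huv)⟩ : ↥{x : X | φ x ≤ v})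
    else ∅ with hgdef
  have hgS : ∀ (C) (h : ∃ p : ↥{x : X | φ x ≤ v'}, φ (p : X) ≤ u ∧ C = connectedComponent p),
      g C = connectedComponent
        (⟨(h.choose).1, le_trans h.choose_spec.1 (le_of_lt huv)⟩ : ↥{x : X | φ x ≤ v}) := by
    intro C h
    simp only [hgdef]
    rw [dif_pos h]
  have hg1 : ∀ C ∈ S', g C ∈ S := by
    intro C hC
    have h : ∃ p : ↥{x : X | φ x ≤ v'}, φ (p : X) ≤ u ∧ C = connectedComponent p := hC
    rw [hgS C h]
    exact ⟨_, h.choose_spec.1, rfl⟩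
  have hg2 : Set.InjOn g S' := by
    intro C₁ hC₁ C₂ hC₂ hgeq
    have h₁ : ∃ p : ↥{x : X | φ x ≤ v'}, φ (p : X) ≤ u ∧ C₁ = connectedComponent p := hC₁
    have h₂ : ∃ p : ↥{x : X | φ x ≤ v'}, φ (p : X) ≤ u ∧ C₂ = connectedComponent p := hC₂
    rw [hgS C₁ h₁, hgS C₂ h₂] at hgeq
    have hmon := comp_eq_mono' hsub _ _ hgeq
    rw [h₁.choose_spec.2, h₂.choose_spec.2]
    convert hmon using 2
  set C₀ : Set ↥{x : X | φ x ≤ v'} := connectedComponent (⟨a, hav'⟩ : ↥{x : X | φ x ≤ v'})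
    with hC₀
  have hC₀S' : C₀ ∈ S' := ⟨⟨a, hav'⟩, hau, rfl⟩
  set Cx : Set ↥{x : X | φ x ≤ v} := connectedComponent (⟨a, hav⟩ : ↥{x : X | φ x ≤ v}) with hCx
  set Cy : Set ↥{x : X | φ x ≤ v} := connectedComponent (⟨b, hbv⟩ : ↥{x : X | φ x ≤ v}) with hCy
  have hCxS : Cx ∈ S := ⟨⟨a, hav⟩, hau, rfl⟩
  have hCyS : Cy ∈ S := ⟨⟨b, hbv⟩, hbu, rfl⟩
  have hCxy : Cx ≠ Cy := fun h => hne ((mem_ccIn_iff' hav hbv).mpr h)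
  have heqv' : connectedComponent (⟨a, hav'⟩ : ↥{x : X | φ x ≤ v'}) =
      connectedComponent (⟨b, hbv'⟩ : ↥{x : X | φ x ≤ v'}) :=
    (mem_ccIn_iff' hav' hbv').mp heq
  have hkeyx : ∀ C ∈ S', g C = Cx → C = C₀ := by
    intro C hC hgC
    have h : ∃ p : ↥{x : X | φ x ≤ v'}, φ (p : X) ≤ u ∧ C = connectedComponent p := hC
    rw [hgS C h, hCx] at hgC
    have hmon := comp_eq_mono' hsub _ _ hgC
    rw [h.choose_spec.2, hC₀]
    convert hmon using 2
  have hkeyy : ∀ C ∈ S', g C = Cy → C = C₀ := by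
    intro C hC hgC
    have h : ∃ p : ↥{x : X | φ x ≤ v'}, φ (p : X) ≤ u ∧ C = connectedComponent p := hC
    rw [hgS C h, hCy] at hgC
    have hmon := comp_eq_mono' hsub _ _ hgC
    rw [h.choose_spec.2, hC₀, heqv']
    convert hmon using 2
  have hexc : ∃ c ∈ S, ∀ C ∈ S', g C ≠ c := by
    by_cases hc : g C₀ = Cx
    · refine ⟨Cy, hCyS, fun C hC hgC => ?_⟩
      have hCC := hkeyy C hC hgC
      rw [hCC, hc] at hgC
      exact hCxy hgC
    · refine ⟨Cx, hCxS, fun C hC hgC => ?_⟩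
      have hCC := hkeyx C hC hgC
      rw [hCC] at hgC
      exact hc hgC
  obtain ⟨c, hcS, hcmiss⟩ := hexc
  have hle : S'.ncard ≤ (S \ {c}).ncard :=
    Set.ncard_le_ncard_of_injOn g (fun C hC => ⟨hg1 C hC, fun hcc => hcmiss C hC hcc⟩)
      (hg2.mono (by intro z hz; exact hz)) (hSfin.subset Set.diff_subset)
  have hlt : (S \ {c}).ncard < S.ncard := Set.ncard_diff_singleton_lt_of_mem hcS hSfin
  exact lt_of_le_of_lt hle hlt

end SizeAux

theorem CechTheory.injective_of_comp {X : Type u} [TopologicalSpace X] {K : Type v} [Field K]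
    (C : CechTheory X K) {S T : Set X} (hS : IsCompact S) (hT : IsCompact T) (hST : S ⊆ T)
    (hcomp : ∀ p q : ↥S,
      connectedComponent (⟨p.1, hST p.2⟩ : ↥T) = connectedComponent (⟨q.1, hST q.2⟩ : ↥T) →
      connectedComponent p = connectedComponent q) :
    Function.Injective (C.map hST) := by
  classical
  let fS : ConnectedComponents ↥S → ↥S := Function.surjInv ConnectedComponents.surjective_coe
  have hfS : ∀ c, ConnectedComponents.mk (fS c) = c :=
    fun c => Function.surjInv_eq ConnectedComponents.surjective_coe c
  have hindep := C.cls_indep S hS fS hfS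
  have hspan : ⊤ ≤ Submodule.span K (Set.range fun c => C.cls S (fS c)) := by
    rw [← C.cls_span S hS]
    apply Submodule.span_le.mpr
    rintro z ⟨x, rfl⟩
    have hx : C.cls S x = C.cls S (fS (ConnectedComponents.mk x)) := by
      rw [C.cls_eq_iff S hS x (fS (ConnectedComponents.mk x))]
      exact (ConnectedComponents.coe_eq_coe.mp (hfS (ConnectedComponents.mk x))).symm
    rw [hx]
    exact Submodule.subset_span ⟨_, rfl⟩
  let b : Module.Basis (ConnectedComponents ↥S) K (C.H0 S) := Module.Basis.mk hindep hspan
  let fT : ConnectedComponents ↥T → ↥T := Function.surjInv ConnectedComponents.surjective_coe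
  have hfT : ∀ c, ConnectedComponents.mk (fT c) = c :=
    fun c => Function.surjInv_eq ConnectedComponents.surjective_coe c
  have hTindep := C.cls_indep T hT fT hfT
  let θ : ConnectedComponents ↥S → ConnectedComponents ↥T :=
    fun c => ConnectedComponents.mk ⟨(fS c).1, hST (fS c).2⟩
  have hθinj : Function.Injective θ := by
    intro c₁ c₂ h
    have h' := ConnectedComponents.coe_eq_coe.mp h
    have h2 := hcomp (fS c₁) (fS c₂) h'
    calc c₁ = ConnectedComponents.mk (fS c₁) := (hfS c₁).symm
      _ = ConnectedComponents.mk (fS c₂) := ConnectedComponents.coe_eq_coe.mpr h2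
      _ = c₂ := hfS c₂
  have himg : ∀ c, C.map hST (b c) = C.cls T (fT (θ c)) := by
    intro c
    have hb : b c = C.cls S (fS c) := Module.Basis.mk_apply hindep hspan c
    rw [hb, C.map_cls hST (fS c), C.cls_eq_iff T hT]
    exact (ConnectedComponents.coe_eq_coe.mp (hfT (θ c))).symm
  have hindep2 : LinearIndependent K fun c => C.map hST (b c) := by
    have hfe : (fun c => C.map hST (b c)) = (fun d => C.cls T (fT d)) ∘ θ := funext himg
    rw [hfe]
    exact hTindep.comp θ hθinj
  rw [← LinearMap.ker_eq_bot]
  rw [Submodule.eq_bot_iff]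
  intro z hz
  have hz' : C.map hST z = 0 := hz
  have hrepr := b.linearCombination_repr z
  rw [← hrepr, Finsupp.apply_linearCombination] at hz'
  have hl := linearIndependent_iff.mp hindep2 (b.repr z) hz'
  rw [← hrepr, hl, map_zero]

/-- Proposition 3.11 (ii): let `(X, φ)` be a size pair with at most
finitely many homological 0-critical values, and let `w` be a homological 0-critical
value. If the inclusion-induced map `ι₀^{w−ε,w+ε} : Ȟ₀(X_{w−ε}) → Ȟ₀(X_{w+ε})` is
surjective for every sufficiently small `ε > 0`, then there exists `u < w` such that `w`
is a discontinuity point of `v ↦ ℓ_{(X,φ)}(u, v)`. -/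
theorem exists_discontinuity_second_var {X : Type u} [TopologicalSpace X] [CompactSpace X]
    [T2Space X] [LocallyConnectedSpace X] [Nonempty X] {K : Type v} [Field K]
    (C : CechTheory X K) {φ : X → ℝ} (hφ : Continuous φ)
    (hfin : {w : ℝ | C.IsHomCritical φ w}.Finite)
    {w : ℝ} (hw : C.IsHomCritical φ w)
    (hsurj : ∃ ε₀ > (0 : ℝ), ∀ ε : ℝ, ∀ hε : 0 < ε, ε < ε₀ →
      Function.Surjective (C.map (show {x : X | φ x ≤ w - ε} ⊆ {x : X | φ x ≤ w + ε} from
        fun x (hx : φ x ≤ w - ε) => show φ x ≤ w + ε from le_trans hx (by linarith)))) :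
    ∃ u < w, ¬ ContinuousAt (fun v : ℝ => (sizeFun φ u v : ℝ)) w := by
  classical
  obtain ⟨ε₁, hε₁, hcrit⟩ := hw
  obtain ⟨ε₂, hε₂, hs⟩ := hsurj
  have hA : ∀ v : ℝ, IsCompact {x : X | φ x ≤ v} :=
    fun v => (IsClosed.preimage hφ isClosed_Iic).isCompact
  have hcrit' : ({w' : ℝ | C.IsHomCritical φ w'} \ {w}).Finite := hfin.diff
  have hclosed : IsClosed ({w' : ℝ | C.IsHomCritical φ w'} \ {w}) := hcrit'.isClosed
  have hwnot : w ∈ ({w' : ℝ | C.IsHomCritical φ w'} \ {w})ᶜ := fun h => h.2 rfl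
  obtain ⟨ε₃, hε₃, hball⟩ := Metric.isOpen_iff.mp hclosed.isOpen_compl w hwnot
  set ε := min (min ε₁ ε₂) ε₃ / 2 with hεdef
  have hminpos : 0 < min (min ε₁ ε₂) ε₃ := lt_min (lt_min hε₁ hε₂) hε₃
  have hε0 : 0 < ε := by rw [hεdef]; linarith
  have hεε₁ : ε < ε₁ := by
    have h1 := min_le_left (min ε₁ ε₂) ε₃
    have h2 := min_le_left ε₁ ε₂
    rw [hεdef]; linarith
  have hεε₂ : ε < ε₂ := by
    have h1 := min_le_left (min ε₁ ε₂) ε₃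
    have h2 := min_le_right ε₁ ε₂
    rw [hεdef]; linarith
  have hεε₃ : ε < ε₃ := by
    have h1 := min_le_right (min ε₁ ε₂) ε₃
    rw [hεdef]; linarith
  have honly : ∀ v, C.IsHomCritical φ v → w - ε < v → v ≤ w + ε → v = w := by
    intro v hv h1 h2
    by_contra hvne
    have hvball : v ∈ Metric.ball w ε₃ := by
      rw [Metric.mem_ball, Real.dist_eq, abs_lt]
      constructor <;> linarith
    exact hball hvball ⟨hv, hvne⟩
  have hsubεε : {x : X | φ x ≤ w - ε} ⊆ {x : X | φ x ≤ w + ε} := by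
    intro x hx
    have hx' : φ x ≤ w - ε := hx
    show φ x ≤ w + ε
    linarith
  have hninj : ¬ Function.Injective (C.map hsubεε) := by
    intro hinj
    exact hcrit ε hε0 hεε₁ ⟨hinj, hs ε hε0 hεε₂⟩
  have hcompfail : ¬ ∀ p q : ↥{x : X | φ x ≤ w - ε},
      connectedComponent (⟨p.1, hsubεε p.2⟩ : ↥{x : X | φ x ≤ w + ε}) =
        connectedComponent (⟨q.1, hsubεε q.2⟩ : ↥{x : X | φ x ≤ w + ε}) →
      connectedComponent p = connectedComponent q :=
    fun h => hninj (C.injective_of_comp (hA _) (hA _) hsubεε h)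
  push_neg at hcompfail
  obtain ⟨p, q, hpq1, hpq2⟩ := hcompfail
  have hap : φ (p : X) ≤ w - ε := p.2
  have hbq : φ (q : X) ≤ w - ε := q.2
  have hbig : (q : X) ∈ connectedComponentIn {x : X | φ x ≤ w + ε} (p : X) :=
    (mem_ccIn_iff' (hsubεε p.2) (hsubεε q.2)).mpr hpq1
  have hsmall : (q : X) ∉ connectedComponentIn {x : X | φ x ≤ w - ε} (p : X) :=
    fun h => hpq2 ((mem_ccIn_iff' p.2 q.2).mp h)
  set Tm := {v' : ℝ | v' ∈ Set.Icc (w - ε) (w + ε) ∧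
    (q : X) ∉ connectedComponentIn {x : X | φ x ≤ v'} (p : X)} with hTmdef
  have hTne : (w - ε) ∈ Tm := ⟨⟨le_refl _, by linarith⟩, hsmall⟩
  have hTbdd : BddAbove Tm := ⟨w + ε, fun t ht => ht.1.2⟩
  set m := sSup Tm with hmdef
  have hm1 : w - ε ≤ m := le_csSup hTbdd hTne
  have hm2 : m ≤ w + ε := csSup_le ⟨_, hTne⟩ (fun t ht => ht.1.2)
  have hup : ∀ v', m < v' → (q : X) ∈ connectedComponentIn {x : X | φ x ≤ v'} (p : X) := by
    intro v' hv'
    by_cases hle : v' ≤ w + ε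
    · by_contra hb
      have hmem : v' ∈ Tm := ⟨⟨by linarith, hle⟩, hb⟩
      exact absurd (le_csSup hTbdd hmem) (not_le.mpr hv')
    · have hwv : w + ε < v' := not_le.mp hle
      exact connectedComponentIn_mono (p : X)
        (fun x hx => show φ x ≤ v' from le_trans hx (le_of_lt hwv)) hbig
  have hdown : ∀ v', v' < m → (q : X) ∉ connectedComponentIn {x : X | φ x ≤ v'} (p : X) := by
    intro v' hv' hmem
    obtain ⟨t, ht, hvt⟩ := exists_lt_of_lt_csSup ⟨_, hTne⟩ hv'
    exact ht.2 (connectedComponentIn_mono (p : X)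
      (fun x hx => show φ x ≤ t from le_trans hx (le_of_lt hvt)) hmem)
  have ham : φ (p : X) ≤ m := le_trans hap hm1
  have hmm : (q : X) ∈ connectedComponentIn {x : X | φ x ≤ m} (p : X) :=
    mem_ccIn_of_forall_gt hφ ham hup
  have hmgt : w - ε < m := by
    rcases lt_or_eq_of_le hm1 with h | h
    · exact h
    · exfalso; rw [← h] at hmm; exact hsmall hmm
  have hmcrit : C.IsHomCritical φ m := by
    refine ⟨m - (w - ε), by linarith, ?_⟩
    intro δ hδ0 hδ hbij
    have haδ : φ (p : X) ≤ m - δ := by linarith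
    have hbδ : φ (q : X) ≤ m - δ := by linarith
    have hsubδ : {x : X | φ x ≤ m - δ} ⊆ {x : X | φ x ≤ m + δ} := by
      intro x hx
      have hx' : φ x ≤ m - δ := hx
      show φ x ≤ m + δ
      linarith
    have hclsne : C.cls {x : X | φ x ≤ m - δ} ⟨(p : X), haδ⟩ ≠
        C.cls {x : X | φ x ≤ m - δ} ⟨(q : X), hbδ⟩ := by
      intro hclseq
      rw [C.cls_eq_iff _ (hA _)] at hclseq
      exact hdown (m - δ) (by linarith) ((mem_ccIn_iff' (F := {x : X | φ x ≤ m - δ}) haδ hbδ).mpr hclseq)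
    apply hclsne
    apply hbij.injective
    rw [C.map_cls, C.map_cls, C.cls_eq_iff _ (hA _)]
    exact (mem_ccIn_iff' (hsubδ haδ) (hsubδ hbδ)).mp (hup (m + δ) (by linarith))
  have hmw : m = w := honly m hmcrit hmgt hm2
  refine ⟨w - ε, by linarith, ?_⟩
  intro hcont
  rw [Metric.continuousAt_iff] at hcont
  obtain ⟨δ, hδ0, hδprop⟩ := hcont (1/2) (by norm_num)
  set δ' := min (δ/2) (ε/2) with hδ'def
  have hδ'0 : 0 < δ' := lt_min (by linarith) (by linarith)
  have hδ'δ : δ' < δ := lt_of_le_of_lt (min_le_left _ _) (by linarith)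
  have hδ'ε : δ' < ε := lt_of_le_of_lt (min_le_right _ _) (by linarith)
  have hne2 : (q : X) ∉ connectedComponentIn {x : X | φ x ≤ w - δ'} (p : X) :=
    hdown (w - δ') (by rw [hmw]; linarith)
  have heq2 : (q : X) ∈ connectedComponentIn {x : X | φ x ≤ w} (p : X) := by
    have h := hmm
    rw [hmw] at h
    exact h
  have hlt := sizeFun_lt' hφ (show w - ε < w - δ' by linarith)
    (show w - δ' ≤ w by linarith) hap hbq hne2 heq2
  have hdist : dist (w - δ') w < δ := by
    rw [Real.dist_eq, abs_lt]; constructor <;> linarith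
  have hval := hδprop hdist
  simp only [Real.dist_eq] at hval
  rw [abs_lt] at hval
  have hc1 : (sizeFun φ (w - ε) w : ℝ) + 1 ≤ (sizeFun φ (w - ε) (w - δ') : ℝ) := by
    exact_mod_cast Nat.succ_le_of_lt hlt
  linarith [hval.1, hval.2]
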